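/- Let N = rs with r, s positive integers and gcd(r, s) = 1, let f be a divisor of N and v an integer with gcd(v, N) = 1, and set w = vf, f_r = gcd(w, r), f_s = gcd(w, s), r′ = r/f_r, s′ = s/f_s. Let C, D be integers with C > 0 and gcd(C, D) = 1. Then the following are equivalent: (a) there exist integers A, B with AD − BC = 1, C ≡ −wA (mod r), and D ≡ −wB (mod s); (b) gcd(C, r) = f_r, gcd(D, s) = f_s, D·(C/f_r) ≡ −(w/f_r) (mod gcd(f_r, r′)), and (D/f_s)·C ≡ (w/f_s) (mod gcd(f_s, s′)). -/

import Mathlib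

lemma crtZ (m n a b : ℤ) (h : IsCoprime m n) :
    ∃ t : ℤ, t ≡ a [ZMOD m] ∧ t ≡ b [ZMOD n] := by
  obtain ⟨u, v, huv⟩ := h
  refine ⟨a * (v * n) + b * (u * m), ?_, ?_⟩
  · exact (Int.modEq_iff_dvd.mpr ⟨(b - a) * u, by linear_combination a * huv⟩).symm
  · exact (Int.modEq_iff_dvd.mpr ⟨(a - b) * v, by linear_combination b * huv⟩).symm

lemma solveZ (u C X m : ℤ) (hu : IsCoprime u m) (h : (Int.gcd C m : ℤ) ∣ X) :
    ∃ t : ℤ, t * (u * C) ≡ X [ZMOD m] := by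
  obtain ⟨k, hk⟩ := h
  obtain ⟨a, b, hab⟩ := hu
  have hb := Int.gcd_eq_gcd_ab C m
  refine ⟨a * Int.gcdA C m * k, (Int.modEq_iff_dvd.mpr
    ⟨-(Int.gcdB C m * k) - Int.gcdA C m * k * C * b, ?_⟩).symm⟩
  linear_combination (Int.gcdA C m * k * C) * hab - hk - k * hb

lemma sideFacts (r : ℕ) (hr : 0 < r) (w : ℤ) (fr r' : ℕ)
    (hfr : fr = Int.gcd w r) (hr' : r' = r / fr) :
    0 < fr ∧ (fr : ℤ) ∣ w ∧ (r : ℤ) = fr * r' ∧ IsCoprime (w / (fr : ℤ)) ((r' : ℤ)) := by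
  have hrne : (r : ℤ) ≠ 0 := Int.natCast_ne_zero.mpr hr.ne'
  have hfrpos : 0 < fr := by
    rw [hfr, Nat.pos_iff_ne_zero]
    intro h0
    exact hrne (Int.gcd_eq_zero_iff.mp h0).2
  have hfrw : (fr : ℤ) ∣ w := by rw [hfr]; exact Int.gcd_dvd_left _ _
  have hfrr : (fr : ℤ) ∣ (r : ℤ) := by rw [hfr]; exact Int.gcd_dvd_right _ _
  have hfrrn : fr ∣ r := by exact_mod_cast hfrr
  have hrr' : (r : ℤ) = fr * r' := by
    rw [hr']
    exact_mod_cast (Nat.mul_div_cancel' hfrrn).symm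
  refine ⟨hfrpos, hfrw, hrr', ?_⟩
  have hfrz : (fr : ℤ) ≠ 0 := Int.natCast_ne_zero.mpr hfrpos.ne'
  have hr'eq : ((r' : ℤ)) = (r : ℤ) / (fr : ℤ) := by
    rw [hrr', Int.mul_ediv_cancel_left _ hfrz]
  rw [Int.isCoprime_iff_gcd_eq_one, hr'eq]
  have h := Int.gcd_div_gcd_div_gcd (i := w) (j := (r : ℤ)) (by rw [← hfr]; exact hfrpos)
  rwa [← hfr] at h



/-- **Characterization of the lower rows occurring in the double coset**
(Lemma 3.7 of the paper, reformulated for the bottom-row entries `C`, `D`): for coprime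
`C > 0`, `D`, there are `A`, `B` with `AD - BC = 1`, `C ≡ -wA (mod r)`, `D ≡ -wB (mod s)`
iff `(C,r) = f_r`, `(D,s) = f_s`, `D·(C/f_r) ≡ -(w/f_r) (mod (f_r,r′))` and
`(D/f_s)·C ≡ w/f_s (mod (f_s,s′))`. -/
theorem stmt_12 (r s : ℕ) (hr : 0 < r) (hs : 0 < s) (hrs : Nat.Coprime r s)
    (f : ℕ) (hf : f ∣ r * s) (v : ℤ) (hv : IsCoprime v ((r * s : ℕ) : ℤ))
    (w : ℤ) (hw : w = v * f)
    (fr fs r' s' : ℕ)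
    (hfr : fr = Int.gcd w r) (hfs : fs = Int.gcd w s)
    (hr' : r' = r / fr) (hs' : s' = s / fs)
    (C D : ℤ) (hC : 0 < C) (hCD : IsCoprime C D) :
    (∃ A B : ℤ, A * D - B * C = 1 ∧ C ≡ -w * A [ZMOD (r : ℤ)] ∧ D ≡ -w * B [ZMOD (s : ℤ)]) ↔
    (Int.gcd C r = fr ∧ Int.gcd D s = fs ∧
      D * (C / (fr : ℤ)) ≡ -(w / (fr : ℤ)) [ZMOD (Nat.gcd fr r' : ℤ)] ∧
      (D / (fs : ℤ)) * C ≡ w / (fs : ℤ) [ZMOD (Nat.gcd fs s' : ℤ)]) := by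
  obtain ⟨hfrpos, hfrw, hrr', hw1r'⟩ := sideFacts r hr w fr r' hfr hr'
  obtain ⟨hfspos, hfsw, hss', hw2s'⟩ := sideFacts s hs w fs s' hfs hs'
  have hfrz : (fr : ℤ) ≠ 0 := Int.natCast_ne_zero.mpr hfrpos.ne'
  have hfsz : (fs : ℤ) ≠ 0 := Int.natCast_ne_zero.mpr hfspos.ne'
  have hfrr : (fr : ℤ) ∣ (r : ℤ) := ⟨r', hrr'⟩
  have hfss : (fs : ℤ) ∣ (s : ℤ) := ⟨s', hss'⟩
  have hr'r : ((r' : ℤ)) ∣ (r : ℤ) := ⟨fr, by linear_combination hrr'⟩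
  have hs's : ((s' : ℤ)) ∣ (s : ℤ) := ⟨fs, by linear_combination hss'⟩
  set w1 : ℤ := w / (fr : ℤ) with hw1
  set w2 : ℤ := w / (fs : ℤ) with hw2
  set C1 : ℤ := C / (fr : ℤ) with hC1
  set D1 : ℤ := D / (fs : ℤ) with hD1
  have hww1 : w = fr * w1 := (Int.mul_ediv_cancel' hfrw).symm
  have hww2 : w = fs * w2 := (Int.mul_ediv_cancel' hfsw).symm
  set gr : ℕ := Nat.gcd fr r' with hgrdef
  set gs : ℕ := Nat.gcd fs s' with hgsdef
  have hgrfr : (gr : ℤ) ∣ (fr : ℤ) := Int.natCast_dvd_natCast.mpr (Nat.gcd_dvd_left _ _)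
  have hgsfs : (gs : ℤ) ∣ (fs : ℤ) := Int.natCast_dvd_natCast.mpr (Nat.gcd_dvd_left _ _)
  have hgrr' : (gr : ℤ) ∣ ((r' : ℤ)) := Int.natCast_dvd_natCast.mpr (Nat.gcd_dvd_right _ _)
  have hgss' : (gs : ℤ) ∣ ((s' : ℤ)) := Int.natCast_dvd_natCast.mpr (Nat.gcd_dvd_right _ _)
  constructor
  · rintro ⟨A, B, hAB, hCA, hDB⟩
    obtain ⟨x, hx⟩ : (r : ℤ) ∣ C + w * A := by
      obtain ⟨y, hy⟩ := Int.ModEq.dvd hCA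
      exact ⟨-y, by linear_combination -hy⟩
    obtain ⟨z, hz⟩ : (s : ℤ) ∣ D + w * B := by
      obtain ⟨y, hy⟩ := Int.ModEq.dvd hDB
      exact ⟨-y, by linear_combination -hy⟩
    have hAC : IsCoprime A C := ⟨D, -B, by linear_combination hAB⟩
    have hBD : IsCoprime B D := ⟨-C, A, by linear_combination hAB⟩
    have hfrC : (fr : ℤ) ∣ C := by
      have h1 : (fr : ℤ) ∣ C + w * A := hfrr.trans ⟨x, hx⟩
      have h2 : (fr : ℤ) ∣ w * A := hfrw.mul_right A
      have := dvd_sub h1 h2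
      simpa using this
    have hfsD : (fs : ℤ) ∣ D := by
      have h1 : (fs : ℤ) ∣ D + w * B := hfss.trans ⟨z, hz⟩
      have h2 : (fs : ℤ) ∣ w * B := hfsw.mul_right B
      have := dvd_sub h1 h2
      simpa using this
    have hCC1 : C = fr * C1 := (Int.mul_ediv_cancel' hfrC).symm
    have hDD1 : D = fs * D1 := (Int.mul_ediv_cancel' hfsD).symm
    refine ⟨?_, ?_, ?_, ?_⟩
    · apply Nat.dvd_antisymm
      · have hdC : ((Int.gcd C r : ℕ) : ℤ) ∣ C := Int.gcd_dvd_left _ _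
        have hdr : ((Int.gcd C r : ℕ) : ℤ) ∣ (r : ℤ) := Int.gcd_dvd_right _ _
        have hdwA : ((Int.gcd C r : ℕ) : ℤ) ∣ w * A := by
          have := dvd_sub (hdr.trans ⟨x, hx⟩) hdC
          simpa using this
        have hdA : IsCoprime ((Int.gcd C r : ℕ) : ℤ) A :=
          IsCoprime.of_isCoprime_of_dvd_left hAC.symm hdC
        have hdw : ((Int.gcd C r : ℕ) : ℤ) ∣ w := hdA.dvd_of_dvd_mul_right hdwA
        have h := Int.dvd_coe_gcd hdw hdr
        rw [← hfr] at h
        exact_mod_cast h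
      · exact_mod_cast Int.dvd_coe_gcd hfrC hfrr
    · apply Nat.dvd_antisymm
      · have hdD : ((Int.gcd D s : ℕ) : ℤ) ∣ D := Int.gcd_dvd_left _ _
        have hds : ((Int.gcd D s : ℕ) : ℤ) ∣ (s : ℤ) := Int.gcd_dvd_right _ _
        have hdwB : ((Int.gcd D s : ℕ) : ℤ) ∣ w * B := by
          have := dvd_sub (hds.trans ⟨z, hz⟩) hdD
          simpa using this
        have hdB : IsCoprime ((Int.gcd D s : ℕ) : ℤ) B :=
          IsCoprime.of_isCoprime_of_dvd_left hBD.symm hdD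
        have hdw : ((Int.gcd D s : ℕ) : ℤ) ∣ w := hdB.dvd_of_dvd_mul_right hdwB
        have h := Int.dvd_coe_gcd hdw hds
        rw [← hfs] at h
        exact_mod_cast h
      · exact_mod_cast Int.dvd_coe_gcd hfsD hfss
    · -- D * C1 ≡ -w1 [ZMOD gr]
      have hxr : C1 + w1 * A = (r' : ℤ) * x := by
        apply mul_left_cancel₀ hfrz
        linear_combination hx + x * hrr' - A * hww1 - hCC1
      obtain ⟨y, hy⟩ : (gr : ℤ) ∣ C1 + w1 * A := hgrr'.trans ⟨x, hxr⟩
      obtain ⟨c, hc⟩ : (gr : ℤ) ∣ C := hgrfr.trans ⟨C1, hCC1⟩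
      exact (Int.modEq_iff_dvd.mpr ⟨D * y - w1 * B * c, by
        linear_combination D * hy - w1 * B * hc - w1 * hAB⟩).symm
    · -- D1 * C ≡ w2 [ZMOD gs]
      have hzs : D1 + w2 * B = (s' : ℤ) * z := by
        apply mul_left_cancel₀ hfsz
        linear_combination hz + z * hss' - B * hww2 - hDD1
      obtain ⟨y2, hy2⟩ : (gs : ℤ) ∣ D1 + w2 * B := hgss'.trans ⟨z, hzs⟩
      obtain ⟨d, hd⟩ : (gs : ℤ) ∣ D := hgsfs.trans ⟨D1, hDD1⟩
      exact (Int.modEq_iff_dvd.mpr ⟨C * y2 - w2 * A * d, by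
        linear_combination C * hy2 - w2 * A * hd + w2 * hAB⟩).symm
  · rintro ⟨h1, h2, h3, h4⟩
    obtain ⟨u, vv, huv⟩ := hCD
    set A0 : ℤ := vv with hA0
    set B0 : ℤ := -u with hB0
    have hAB0 : A0 * D - B0 * C = 1 := by simp only [hA0, hB0]; linear_combination huv
    have hfrC : (fr : ℤ) ∣ C := by
      have h := Int.gcd_dvd_left (a := C) (b := (r : ℤ))
      rwa [h1] at h
    have hfsD : (fs : ℤ) ∣ D := by
      have h := Int.gcd_dvd_left (a := D) (b := (s : ℤ))
      rwa [h2] at h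
    have hCC1 : C = fr * C1 := (Int.mul_ediv_cancel' hfrC).symm
    have hDD1 : D = fs * D1 := (Int.mul_ediv_cancel' hfsD).symm
    -- r-side solvability
    have hAr : ((Int.gcd C (r' : ℤ) : ℕ) : ℤ) ∣ (gr : ℤ) := by
      have hd1 : ((Int.gcd C (r' : ℤ) : ℕ) : ℤ) ∣ C := Int.gcd_dvd_left _ _
      have hd2 : ((Int.gcd C (r' : ℤ) : ℕ) : ℤ) ∣ ((r' : ℤ)) := Int.gcd_dvd_right _ _
      have hd3 := Int.dvd_coe_gcd hd1 (hd2.trans hr'r)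
      rw [h1] at hd3
      have hn1 : Int.gcd C (r' : ℤ) ∣ fr := by exact_mod_cast hd3
      have hn2 : Int.gcd C (r' : ℤ) ∣ r' := by exact_mod_cast hd2
      exact_mod_cast Nat.dvd_gcd hn1 hn2
    have hBr : (gr : ℤ) ∣ -(w1 * A0 + C1) := by
      obtain ⟨m3, hm3⟩ := Int.ModEq.dvd h3
      obtain ⟨c, hc⟩ : (gr : ℤ) ∣ C := hgrfr.trans ⟨C1, hCC1⟩
      exact ⟨A0 * m3 + B0 * c * C1, by
        linear_combination A0 * hm3 + B0 * C1 * hc + C1 * hAB0⟩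
    obtain ⟨t1, ht1⟩ := solveZ w1 C (-(w1 * A0 + C1)) ((r' : ℤ)) hw1r' (hAr.trans hBr)
    -- s-side solvability
    have hAs : ((Int.gcd D (s' : ℤ) : ℕ) : ℤ) ∣ (gs : ℤ) := by
      have hd1 : ((Int.gcd D (s' : ℤ) : ℕ) : ℤ) ∣ D := Int.gcd_dvd_left _ _
      have hd2 : ((Int.gcd D (s' : ℤ) : ℕ) : ℤ) ∣ ((s' : ℤ)) := Int.gcd_dvd_right _ _
      have hd3 := Int.dvd_coe_gcd hd1 (hd2.trans hs's)
      rw [h2] at hd3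
      have hn1 : Int.gcd D (s' : ℤ) ∣ fs := by exact_mod_cast hd3
      have hn2 : Int.gcd D (s' : ℤ) ∣ s' := by exact_mod_cast hd2
      exact_mod_cast Nat.dvd_gcd hn1 hn2
    have hBs : (gs : ℤ) ∣ -(w2 * B0 + D1) := by
      obtain ⟨m4, hm4⟩ := Int.ModEq.dvd h4
      obtain ⟨d, hd⟩ : (gs : ℤ) ∣ D := hgsfs.trans ⟨D1, hDD1⟩
      exact ⟨-(B0 * m4) - A0 * d * D1, by
        linear_combination -B0 * hm4 - A0 * D1 * hd + D1 * hAB0⟩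
    obtain ⟨t2, ht2⟩ := solveZ w2 D (-(w2 * B0 + D1)) ((s' : ℤ)) hw2s' (hAs.trans hBs)
    -- CRT
    have hr's' : IsCoprime ((r' : ℤ)) ((s' : ℤ)) := by
      rw [Nat.isCoprime_iff_coprime]
      have hr'rn : r' ∣ r := by exact_mod_cast hr'r
      have hs'sn : s' ∣ s := by exact_mod_cast hs's
      exact Nat.Coprime.coprime_dvd_left hr'rn (Nat.Coprime.coprime_dvd_right hs'sn hrs)
    obtain ⟨t, htr, hts⟩ := crtZ ((r' : ℤ)) ((s' : ℤ)) t1 t2 hr's'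
    refine ⟨A0 + t * C, B0 + t * D, by ring_nf; linear_combination hAB0, ?_, ?_⟩
    · obtain ⟨q, hq⟩ : ((r' : ℤ)) ∣ w1 * A0 + C1 + t * (w1 * C) := by
        have h5 : t * (w1 * C) ≡ -(w1 * A0 + C1) [ZMOD ((r' : ℤ))] :=
          ((htr.mul_right (w1 * C)).trans ht1)
        obtain ⟨q, hq⟩ := Int.ModEq.dvd h5
        exact ⟨-q, by linear_combination -hq⟩
      exact (Int.modEq_iff_dvd.mpr ⟨-q, by
        linear_combination -(fr : ℤ) * hq - (A0 + t * C) * hww1 - hCC1 + q * hrr'⟩)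
    · obtain ⟨q, hq⟩ : ((s' : ℤ)) ∣ w2 * B0 + D1 + t * (w2 * D) := by
        have h5 : t * (w2 * D) ≡ -(w2 * B0 + D1) [ZMOD ((s' : ℤ))] :=
          ((hts.mul_right (w2 * D)).trans ht2)
        obtain ⟨q, hq⟩ := Int.ModEq.dvd h5
        exact ⟨-q, by linear_combination -hq⟩
      exact (Int.modEq_iff_dvd.mpr ⟨-q, by
        linear_combination -(fs : ℤ) * hq - (B0 + t * D) * hww2 - hDD1 + q * hss'⟩)
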